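/- Let ℋ = ℂ²⊗ℂ²⊗ℂ²⊗ℂ² with the action of Ĝ = SL(2,ℂ)⁴. The stabiliser in Ĝ of the element e₁₁₀₀ = e₁⊗e₁⊗e₀⊗e₀ equals {(D(b⁻¹cd, a'), D(b, b'), D(c, c')ᵀ, D(d, d')ᵀ) : a', b', c', d' ∈ ℂ and b, c, d ∈ ℂ with b, c, d ≠ 0}, where D(u, v) = [[u,0],[v,u⁻¹]] and ᵀ denotes matrix transpose. -/

import Mathlib

/-- The Hilbert space of four qubits, in coordinates with respect to the basis
`e_{i₁i₂i₃i₄} = e_{i₁} ⊗ e_{i₂} ⊗ e_{i₃} ⊗ e_{i₄}` of `ℂ² ⊗ ℂ² ⊗ ℂ² ⊗ ℂ²`. -/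
abbrev H4 : Type := Fin 2 → Fin 2 → Fin 2 → Fin 2 → ℂ

abbrev SL2 := Matrix.SpecialLinearGroup (Fin 2) ℂ

/-- The group `Ĝ = SL(2,ℂ)⁴`. -/
abbrev G4 := SL2 × SL2 × SL2 × SL2

/-- The action of `SL(2,ℂ)⁴` on `ℂ² ⊗ ℂ² ⊗ ℂ² ⊗ ℂ²`, given in coordinates:
it is the linear extension of `(A,B,C,D)·(v₁⊗v₂⊗v₃⊗v₄) = Av₁⊗Bv₂⊗Cv₃⊗Dv₄`. -/
noncomputable def act (g : G4) (x : H4) : H4 := fun i1 i2 i3 i4 =>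
  ∑ j1 : Fin 2, ∑ j2 : Fin 2, ∑ j3 : Fin 2, ∑ j4 : Fin 2,
    g.1 i1 j1 * g.2.1 i2 j2 * g.2.2.1 i3 j3 * g.2.2.2 i4 j4 * x j1 j2 j3 j4

/-- The basis vector `e_{i₁i₂i₃i₄}`. -/
def e (i1 i2 i3 i4 : Fin 2) : H4 := fun j1 j2 j3 j4 =>
  if j1 = i1 ∧ j2 = i2 ∧ j3 = i3 ∧ j4 = i4 then 1 else 0

/-- `D(u, v) = [[u,0],[v,u⁻¹]]` for `u` a nonzero complex number and `v ∈ ℂ`. -/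
noncomputable def Dlow (u : ℂˣ) (v : ℂ) : SL2 :=
  ⟨!![(u : ℂ), 0; v, ((u⁻¹ : ℂˣ) : ℂ)], by simp [Matrix.det_fin_two_of]⟩

/-- `D(u, v)ᵀ`, the transpose of `D(u, v)`. -/
noncomputable def DlowT (u : ℂˣ) (v : ℂ) : SL2 :=
  ⟨(Dlow u v).1.transpose, by rw [Matrix.det_transpose]; exact (Dlow u v).2⟩

lemma act_apply (g : G4) (i1 i2 i3 i4 : Fin 2) :
    act g (e 1 1 0 0) i1 i2 i3 i4 = g.1 i1 1 * g.2.1 i2 1 * g.2.2.1 i3 0 * g.2.2.2 i4 0 := by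
  simp [act, e, Fin.sum_univ_two]

/-- The stabiliser of `e₁₁₀₀` in `SL(2,ℂ)⁴` equals
`{(D(b⁻¹cd, a'), D(b, b'), D(c, c')ᵀ, D(d, d')ᵀ) : a',b',c',d' ∈ ℂ, b,c,d ∈ ℂˣ}`. -/
theorem stabiliser_nilpotent_e1100 :
    {g : G4 | act g (e 1 1 0 0) = e 1 1 0 0} =
      {g : G4 | ∃ (a' b' c' d' : ℂ) (b c d : ℂˣ),
        g = (Dlow (b⁻¹ * c * d) a', Dlow b b', DlowT c c', DlowT d d')} := by
  ext g
  simp only [Set.mem_setOf_eq]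
  constructor
  · intro h
    obtain ⟨A, B, C, D⟩ := g
    have h' : ∀ i1 i2 i3 i4 : Fin 2,
        A i1 1 * B i2 1 * C i3 0 * D i4 0 = e 1 1 0 0 i1 i2 i3 i4 := by
      intro i1 i2 i3 i4
      rw [← act_apply (A, B, C, D) i1 i2 i3 i4, h]
    have key : A 1 1 * B 1 1 * C 0 0 * D 0 0 = 1 := by
      have := h' 1 1 0 0; simpa [e] using this
    have hA1 : A 1 1 ≠ 0 := fun hz => by simp [hz] at key
    have hB1 : B 1 1 ≠ 0 := fun hz => by simp [hz] at key
    have hC0 : C 0 0 ≠ 0 := fun hz => by simp [hz] at key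
    have hD0 : D 0 0 ≠ 0 := fun hz => by simp [hz] at key
    have hA01 : A 0 1 = 0 := by
      by_contra hne
      have h0 := h' 0 1 0 0
      rw [show e 1 1 0 0 0 1 0 0 = (0:ℂ) from by simp [e]] at h0
      exact (mul_ne_zero (mul_ne_zero (mul_ne_zero hne hB1) hC0) hD0) h0
    have hB01 : B 0 1 = 0 := by
      by_contra hne
      have h0 := h' 1 0 0 0
      rw [show e 1 1 0 0 1 0 0 0 = (0:ℂ) from by simp [e]] at h0
      exact (mul_ne_zero (mul_ne_zero (mul_ne_zero hA1 hne) hC0) hD0) h0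
    have hC10 : C 1 0 = 0 := by
      by_contra hne
      have h0 := h' 1 1 1 0
      rw [show e 1 1 0 0 1 1 1 0 = (0:ℂ) from by simp [e]] at h0
      exact (mul_ne_zero (mul_ne_zero (mul_ne_zero hA1 hB1) hne) hD0) h0
    have hD10 : D 1 0 = 0 := by
      by_contra hne
      have h0 := h' 1 1 0 1
      rw [show e 1 1 0 0 1 1 0 1 = (0:ℂ) from by simp [e]] at h0
      exact (mul_ne_zero (mul_ne_zero (mul_ne_zero hA1 hB1) hC0) hne) h0
    have detA : A 0 0 * A 1 1 = 1 := by
      have := A.2; rw [Matrix.det_fin_two] at this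
      simpa [hA01] using this
    have detB : B 0 0 * B 1 1 = 1 := by
      have := B.2; rw [Matrix.det_fin_two] at this
      simpa [hB01] using this
    have detC : C 0 0 * C 1 1 = 1 := by
      have := C.2; rw [Matrix.det_fin_two] at this
      simpa [hC10] using this
    have detD : D 0 0 * D 1 1 = 1 := by
      have := D.2; rw [Matrix.det_fin_two] at this
      simpa [hD10] using this
    refine ⟨A 1 0, B 1 0, C 0 1, D 0 1,
      ⟨B 0 0, B 1 1, detB, by rw [mul_comm]; exact detB⟩,
      ⟨C 0 0, C 1 1, detC, by rw [mul_comm]; exact detC⟩,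
      ⟨D 0 0, D 1 1, detD, by rw [mul_comm]; exact detD⟩, ?_⟩
    refine Prod.ext ?_ (Prod.ext ?_ (Prod.ext ?_ ?_))
    · apply Subtype.ext
      ext i j
      fin_cases i <;> fin_cases j <;>
          simp [Dlow, hA01, Matrix.transpose_apply]
      · linear_combination (B 1 1 * C 0 0 * D 0 0) * detA - A 0 0 * key
      · linear_combination (B 0 0 * C 1 1 * D 1 1) * key - A 1 1 * detB -
          A 1 1 * B 0 0 * B 1 1 * detC - A 1 1 * B 0 0 * B 1 1 * C 0 0 * C 1 1 * detD
    · apply Subtype.ext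
      ext i j
      fin_cases i <;> fin_cases j <;> simp [Dlow, hB01, Matrix.transpose_apply]
    · apply Subtype.ext
      ext i j
      fin_cases i <;> fin_cases j <;> simp [Dlow, DlowT, hC10, Matrix.transpose, Matrix.vecHead, Matrix.vecTail]
    · apply Subtype.ext
      ext i j
      fin_cases i <;> fin_cases j <;> simp [Dlow, DlowT, hD10, Matrix.transpose, Matrix.vecHead, Matrix.vecTail]
  · rintro ⟨a', b', c', d', b, c, d, rfl⟩
    funext i1 i2 i3 i4
    rw [act_apply]
    fin_cases i1 <;> fin_cases i2 <;> fin_cases i3 <;> fin_cases i4 <;>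
        simp [Dlow, DlowT, e, Matrix.transpose_apply]
    field_simp
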